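/- There exists exactly one solution (u,p) ∈ K × Q of the continuous Biot contact problem; that is, there is exactly one pair (u,p) with u ∈ K such that ⟨u, v−u⟩_H − ⟨p, B(v−u)⟩_Q ≥ ⟨f_e, v−u⟩_H for all v ∈ K and −⟨Bu, q⟩_Q − ⟨p, q⟩_Q = ⟨f_f, q⟩_Q for all q ∈ Q. -/
import Mathlib


open scoped RealInnerProductSpace

/-- Nonexpansivity-flavored key estimate: `‖d - B†(B d)‖ ≤ ‖d‖` when `‖B‖ ≤ 1`. -/
theorem biot_aux_contr {H Q : Type*}
    [NormedAddCommGroup H] [InnerProductSpace ℝ H] [CompleteSpace H]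
    [NormedAddCommGroup Q] [InnerProductSpace ℝ Q] [CompleteSpace Q]
    (B : H →L[ℝ] Q) (hB : ‖B‖ ≤ 1) (d : H) :
    ‖d - B.adjoint (B d)‖ ≤ ‖d‖ := by
  set a := B.adjoint (B d) with ha
  have h1 : ⟪d, a⟫ = ‖B d‖ ^ 2 := by
    rw [ha, ContinuousLinearMap.adjoint_inner_right, ← real_inner_self_eq_norm_sq]
  have h2 : ‖a‖ ≤ ‖B d‖ := by
    have hsq : ‖a‖ ^ 2 = ⟪B d, B a⟫ := by
      conv_lhs => rw [← real_inner_self_eq_norm_sq, ha]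
      rw [ContinuousLinearMap.adjoint_inner_left, ← ha]
    have hle : ⟪B d, B a⟫ ≤ ‖B d‖ * ‖B a‖ := real_inner_le_norm _ _
    have hBa : ‖B a‖ ≤ ‖a‖ := by
      calc ‖B a‖ ≤ ‖B‖ * ‖a‖ := B.le_opNorm a
        _ ≤ 1 * ‖a‖ := by nlinarith [norm_nonneg a]
        _ = ‖a‖ := one_mul _
    nlinarith [norm_nonneg a, norm_nonneg (B d)]
  have hexp : ‖d - a‖ ^ 2 = ‖d‖ ^ 2 - 2 * ⟪d, a⟫ + ‖a‖ ^ 2 := by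
    rw [← real_inner_self_eq_norm_sq, ← real_inner_self_eq_norm_sq,
      ← real_inner_self_eq_norm_sq]
    simp only [inner_sub_left, inner_sub_right, real_inner_comm a d]
    ring
  nlinarith [norm_nonneg (d - a), norm_nonneg d, norm_nonneg (B d), norm_nonneg a]

/-- Existence for the variational inequality with operator `I + B†B`. -/
theorem biot_aux_vi {H Q : Type*}
    [NormedAddCommGroup H] [InnerProductSpace ℝ H] [CompleteSpace H]
    [NormedAddCommGroup Q] [InnerProductSpace ℝ Q] [CompleteSpace Q]
    (B : H →L[ℝ] Q) (hB : ‖B‖ ≤ 1)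
    (K : Set H) (hK_ne : K.Nonempty) (hK_cl : IsClosed K) (hK_cv : Convex ℝ K)
    (g : H) :
    ∃ u ∈ K, ∀ v ∈ K, 0 ≤ ⟪u + B.adjoint (B u) - g, v - u⟫ := by
  have hcomp : IsComplete K := hK_cl.isComplete
  -- projection onto K with variational characterization
  have proj : ∀ x : H, ∃ y, y ∈ K ∧ ∀ w ∈ K, ⟪x - y, w - y⟫ ≤ 0 := by
    intro x
    obtain ⟨y, hy, hmin⟩ := exists_norm_eq_iInf_of_complete_convex hK_ne hcomp hK_cv x
    exact ⟨y, hy, (norm_eq_iInf_iff_real_inner_le_zero hK_cv hy).1 hmin⟩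
  choose P hPmem hP using proj
  -- P is nonexpansive
  have hPlip : ∀ x y : H, ‖P x - P y‖ ≤ ‖x - y‖ := by
    intro x y
    have h1 : ⟪x - P x, P y - P x⟫ ≤ 0 := hP x (P y) (hPmem y)
    have h2 : ⟪y - P y, P x - P y⟫ ≤ 0 := hP y (P x) (hPmem x)
    have hkey : ‖P x - P y‖ ^ 2 ≤ ⟪x - y, P x - P y⟫ := by
      have hexp : ⟪x - y, P x - P y⟫ - ‖P x - P y‖ ^ 2
          = -⟪x - P x, P y - P x⟫ - ⟪y - P y, P x - P y⟫ := by
        rw [← real_inner_self_eq_norm_sq]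
        simp only [inner_sub_left, inner_sub_right]
        ring
      linarith
    have hcs : ⟪x - y, P x - P y⟫ ≤ ‖x - y‖ * ‖P x - P y‖ := real_inner_le_norm _ _
    nlinarith [norm_nonneg (P x - P y), norm_nonneg (x - y)]
  -- the contraction
  set F : H → H := fun w => w - (2⁻¹ : ℝ) • (w + B.adjoint (B w) - g) with hF
  have hFlip : ∀ x y : H, ‖F x - F y‖ ≤ 2⁻¹ * ‖x - y‖ := by
    intro x y
    have heq : F x - F y = (2⁻¹ : ℝ) • ((x - y) - B.adjoint (B (x - y))) := by
      simp only [hF, map_sub, smul_sub, smul_add]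
      module
    rw [heq, norm_smul]
    have := biot_aux_contr B hB (x - y)
    simp only [norm_inv, Real.norm_ofNat]
    nlinarith
  haveI : Nonempty K := hK_ne.to_subtype
  haveI : CompleteSpace K := hcomp.completeSpace_coe
  set φ : K → K := fun w => ⟨P (F (w : H)), hPmem _⟩ with hφ
  have hcontr : ContractingWith (2⁻¹ : NNReal) φ := by
    constructor
    · rw [← NNReal.coe_lt_coe]; norm_num
    · apply LipschitzWith.of_dist_le_mul
      intro x y
      simp only [hφ, Subtype.dist_eq, dist_eq_norm]
      calc ‖P (F (x : H)) - P (F (y : H))‖ ≤ ‖F (x : H) - F (y : H)‖ := hPlip _ _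
        _ ≤ 2⁻¹ * ‖(x : H) - (y : H)‖ := hFlip _ _
        _ = (2⁻¹ : NNReal) * ‖(x : H) - (y : H)‖ := by norm_num
  obtain ⟨u, hu⟩ := hcontr.exists_fixedPoint (Classical.arbitrary K) (edist_ne_top _ _)
  have hfix : P (F (u : H)) = (u : H) := congrArg Subtype.val hu.1
  refine ⟨(u : H), u.2, fun v hv => ?_⟩
  have h := hP (F (u : H)) v hv
  rw [hfix] at h
  have hFu : F (u : H) - (u : H) = -((2⁻¹ : ℝ) • ((u : H) + B.adjoint (B (u : H)) - g)) := by
    simp only [hF]; module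
  rw [hFu] at h
  rw [inner_neg_left, real_inner_smul_left] at h
  nlinarith

/-- Equivalence between the Biot inequality (with `p = -B u - f_f`) and the
variational inequality for `I + B†B`. -/
theorem biot_aux_iff {H Q : Type*}
    [NormedAddCommGroup H] [InnerProductSpace ℝ H] [CompleteSpace H]
    [NormedAddCommGroup Q] [InnerProductSpace ℝ Q] [CompleteSpace Q]
    (B : H →L[ℝ] Q) (f_e : H) (f_f : Q) (u v : H) :
    (⟪u, v - u⟫ - ⟪-B u - f_f, B (v - u)⟫ ≥ ⟪f_e, v - u⟫) ↔
      0 ≤ ⟪u + B.adjoint (B u) - (f_e - B.adjoint f_f), v - u⟫ := by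
  simp only [inner_sub_left, inner_add_left, inner_neg_left,
    ContinuousLinearMap.adjoint_inner_left]
  constructor <;> intro h <;> linarith

/-- Unique existence of the solution of the continuous Biot contact problem. -/
theorem stmt_2 {H Q : Type*}
    [NormedAddCommGroup H] [InnerProductSpace ℝ H] [CompleteSpace H]
    [NormedAddCommGroup Q] [InnerProductSpace ℝ Q] [CompleteSpace Q]
    (B : H →L[ℝ] Q) (hB : ‖B‖ ≤ 1)
    (K : Set H) (hK_ne : K.Nonempty) (hK_cl : IsClosed K) (hK_cv : Convex ℝ K)
    (f_e : H) (f_f : Q) :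
    ∃! up : H × Q, up.1 ∈ K ∧
      (∀ v ∈ K, ⟪up.1, v - up.1⟫ - ⟪up.2, B (v - up.1)⟫ ≥ ⟪f_e, v - up.1⟫) ∧
      (∀ q : Q, -⟪B up.1, q⟫ - ⟪up.2, q⟫ = ⟪f_f, q⟫) := by
  set g : H := f_e - B.adjoint f_f with hg
  obtain ⟨u, huK, hvi⟩ := biot_aux_vi B hB K hK_ne hK_cl hK_cv g
  refine ⟨(u, -B u - f_f), ⟨huK, ?_, ?_⟩, ?_⟩
  · intro v hv
    exact (biot_aux_iff B f_e f_f u v).2 (hvi v hv)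
  · intro q
    simp only [inner_sub_left, inner_neg_left]
    ring
  · rintro ⟨u', p'⟩ ⟨hu'K, h1, h2⟩
    have hp' : p' = -B u' - f_f := by
      have hz : ∀ q : Q, ⟪-B u' - f_f - p', q⟫ = 0 := by
        intro q
        have := h2 q
        simp only [inner_sub_left, inner_neg_left]
        linarith
      have := hz (-B u' - f_f - p')
      rw [inner_self_eq_zero] at this
      have h0 : -B u' - f_f - p' = 0 := this
      exact (sub_eq_zero.1 h0).symm
    subst hp'
    -- u' also solves the VI
    have hvi' : ∀ v ∈ K, 0 ≤ ⟪u' + B.adjoint (B u') - g, v - u'⟫ := by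
      intro v hv
      exact (biot_aux_iff B f_e f_f u' v).1 (h1 v hv)
    have ha := hvi u' hu'K
    have hb := hvi' u huK
    have hsum : ⟪(u - u') + B.adjoint (B (u - u')), u - u'⟫ ≤ 0 := by
      have hexp : ⟪(u - u') + B.adjoint (B (u - u')), u - u'⟫
          = -(⟪u + B.adjoint (B u) - g, u' - u⟫ + ⟪u' + B.adjoint (B u') - g, u - u'⟫) := by
        simp only [map_sub, inner_add_left, inner_sub_left, inner_sub_right]
        ring
      rw [hexp]
      linarith
    have hdn : ‖u - u'‖ ^ 2 + ‖B (u - u')‖ ^ 2 ≤ 0 := by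
      have h1' : ⟪(u - u') + B.adjoint (B (u - u')), u - u'⟫
          = ‖u - u'‖ ^ 2 + ‖B (u - u')‖ ^ 2 := by
        rw [inner_add_left, ContinuousLinearMap.adjoint_inner_left,
          real_inner_self_eq_norm_sq, real_inner_self_eq_norm_sq]
      linarith
    have huu : u' = u := by
      have : ‖u - u'‖ = 0 := by
        nlinarith [norm_nonneg (u - u'), norm_nonneg (B (u - u')), sq_nonneg ‖u - u'‖]
      have := norm_eq_zero.1 this
      exact (sub_eq_zero.1 this).symm
    subst huu
    rfl
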